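/- Let C be a nonempty closed convex subset of a real Hilbert space H, a₁,...,aₘ ∈ H non-collinear, w₁,...,wₘ > 0, and define T(x) = (Σᵢ wᵢ aᵢ/‖x-aᵢ‖)/(Σᵢ wᵢ/‖x-aᵢ‖) for x ∉ {a₁,...,aₘ}. If x̄ ∈ C with x̄ ∉ {a₁,...,aₘ}, then x̄ minimizes f(x) = Σᵢ wᵢ‖x-aᵢ‖ over C if and only if Π_C(T(x̄)) = x̄. -/

import Mathlib

open Finset
open scoped RealInnerProductSpace

/-- The Weiszfeld operator. -/
noncomputable def weiszfeldT {H : Type*} [NormedAddCommGroup H] [InnerProductSpace ℝ H]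
    {m : ℕ} (w : Fin m → ℝ) (a : Fin m → H) (x : H) : H :=
  (∑ i, w i / ‖x - a i‖)⁻¹ • ∑ i, (w i / ‖x - a i‖) • a i

/-- Derivative of the norm at a nonzero point of a real inner product space. -/
private lemma hasFDerivAt_norm_of_ne {H : Type*} [NormedAddCommGroup H]
    [InnerProductSpace ℝ H] {c : H} (hc : c ≠ 0) :
    HasFDerivAt (fun y : H => ‖y‖) (‖c‖⁻¹ • innerSL ℝ c) c := by
  have hc2 : ‖c‖ ^ 2 ≠ 0 := pow_ne_zero 2 (norm_ne_zero_iff.2 hc)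
  have h1 : HasFDerivAt (fun x : H => ‖x‖ ^ 2) (2 • innerSL ℝ c) c :=
    (hasStrictFDerivAt_norm_sq c).hasFDerivAt
  have h2 : HasDerivAt Real.sqrt (1 / (2 * Real.sqrt (‖c‖ ^ 2))) (‖c‖ ^ 2) :=
    Real.hasDerivAt_sqrt hc2
  have h3 := h2.comp_hasFDerivAt c h1
  have hfun : (fun y : H => ‖y‖) = Real.sqrt ∘ (fun x : H => ‖x‖ ^ 2) := by
    funext y
    simp [Real.sqrt_sq (norm_nonneg y)]
  rw [hfun]
  have hEq : (1 / (2 * Real.sqrt (‖c‖ ^ 2))) • (2 • innerSL ℝ c) = ‖c‖⁻¹ • innerSL ℝ c := by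
    ext y
    rw [Real.sqrt_sq (norm_nonneg c)]
    have hn : ‖c‖ ≠ 0 := norm_ne_zero_iff.2 hc
    simp only [ContinuousLinearMap.smul_apply, smul_eq_mul, ContinuousLinearMap.coe_smul',
      Pi.smul_apply, nsmul_eq_mul, Nat.cast_ofNat]
    field_simp
  rw [← hEq]
  exact h3

theorem isMinOn_iff_proj_fixed
    {H : Type*} [NormedAddCommGroup H] [InnerProductSpace ℝ H] [CompleteSpace H]
    {m : ℕ} (hm : 1 ≤ m) (a : Fin m → H) (w : Fin m → ℝ)
    (hw : ∀ i, 0 < w i)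
    (hcol : ¬ ∃ u v : H, ∀ i, ∃ t : ℝ, a i = u + t • v)
    (C : Set H) (hCne : C.Nonempty) (hCclosed : IsClosed C) (hCconv : Convex ℝ C)
    (proj : H → H)
    (hproj : ∀ x : H, proj x ∈ C ∧ ∀ z ∈ C, ⟪x - proj x, z - proj x⟫ ≤ 0)
    (xbar : H) (hxC : xbar ∈ C) (hxA : xbar ∉ Set.range a) :
    IsMinOn (fun x => ∑ i, w i * ‖x - a i‖) C xbar ↔ proj (weiszfeldT w a xbar) = xbar := by
  -- basic positivity facts
  have hne : ∀ i, xbar - a i ≠ 0 := by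
    intro i
    rw [sub_ne_zero]
    exact fun h => hxA ⟨i, h.symm⟩
  have hd : ∀ i, (0:ℝ) < ‖xbar - a i‖ := fun i => norm_pos_iff.2 (hne i)
  set s : ℝ := ∑ i, w i / ‖xbar - a i‖ with hs_def
  have hs : 0 < s := by
    apply Finset.sum_pos
    · intro i _
      exact div_pos (hw i) (hd i)
    · have : Nonempty (Fin m) := Fin.pos_iff_nonempty.mp hm
      exact Finset.univ_nonempty
  -- the "gradient"
  set g : H := ∑ i, (w i / ‖xbar - a i‖) • (xbar - a i) with hg_def
  have hgT : xbar - weiszfeldT w a xbar = s⁻¹ • g := by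
    have hg' : g = s • xbar - ∑ i, (w i / ‖xbar - a i‖) • a i := by
      rw [hg_def, hs_def]
      rw [Finset.sum_smul]
      rw [← Finset.sum_sub_distrib]
      congr 1
      funext i
      rw [smul_sub]
    rw [weiszfeldT, hg', smul_sub, smul_smul, inv_mul_cancel₀ hs.ne', one_smul, ← hs_def]
  have hgT' : g = s • (xbar - weiszfeldT w a xbar) := by
    rw [hgT, smul_smul, mul_inv_cancel₀ hs.ne', one_smul]
  -- Step A: the minimality is equivalent to the variational inequality with g
  have stepA : IsMinOn (fun x => ∑ i, w i * ‖x - a i‖) C xbar ↔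
      ∀ z ∈ C, (0:ℝ) ≤ ⟪g, z - xbar⟫ := by
    constructor
    · intro hmin z hz
      -- use the derivative and the positive tangent cone
      set F : H →L[ℝ] ℝ := ∑ i, (w i / ‖xbar - a i‖) • innerSL ℝ (xbar - a i) with hF_def
      have hF : HasFDerivAt (fun x => ∑ i, w i * ‖x - a i‖) F xbar := by
        rw [hF_def]
        apply HasFDerivAt.fun_sum
        intro i _
        have h1 : HasFDerivAt (fun x : H => x - a i) (ContinuousLinearMap.id ℝ H) xbar :=
          (hasFDerivAt_id xbar).sub_const (a i)
        have h2 := (hasFDerivAt_norm_of_ne (hne i)).comp xbar h1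
        have h3 := h2.const_mul (w i)
        refine h3.congr_fderiv ?_
        ext y
        simp [smul_smul, div_eq_mul_inv, mul_comm]
      have hFval : F (z - xbar) = ⟪g, z - xbar⟫ := by
        rw [hF_def, hg_def]
        simp [ContinuousLinearMap.sum_apply, sum_inner, real_inner_smul_left, inner_sub_left]
      rw [← hFval]
      have hcone : z - xbar ∈ posTangentConeAt C xbar :=
        sub_mem_posTangentConeAt_of_segment_subset (hCconv.segment_subset hxC hz)
      exact IsLocalMinOn.hasFDerivWithinAt_nonneg (hmin.filter_mono inf_le_right)
        hF.hasFDerivWithinAt hcone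
    · intro h z hz
      -- subgradient inequality
      have key : ∀ i : Fin m, (w i / ‖xbar - a i‖) * ⟪xbar - a i, z - xbar⟫ ≤
          w i * ‖z - a i‖ - w i * ‖xbar - a i‖ := by
        intro i
        have h1 : ⟪xbar - a i, z - xbar⟫ =
            ⟪xbar - a i, z - a i⟫ - ‖xbar - a i‖ ^ 2 := by
          rw [← @real_inner_self_eq_norm_sq, ← inner_sub_right]
          congr 1
          abel
        have h2 : ⟪xbar - a i, z - a i⟫ ≤ ‖xbar - a i‖ * ‖z - a i‖ :=
          real_inner_le_norm _ _
        have hdi := hd i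
        have hwi := hw i
        rw [h1, div_mul_eq_mul_div, div_le_iff₀ hdi]
        nlinarith
      have hsum : ⟪g, z - xbar⟫ ≤
          (∑ i, w i * ‖z - a i‖) - ∑ i, w i * ‖xbar - a i‖ := by
        rw [hg_def, sum_inner, ← Finset.sum_sub_distrib]
        apply Finset.sum_le_sum
        intro i _
        rw [real_inner_smul_left]
        exact key i
      have := h z hz
      simp only [Set.mem_setOf_eq]
      linarith
  -- Step B: variational inequality for g ↔ projection fixed point
  rw [stepA]
  have hiff : ∀ z : H, ((0:ℝ) ≤ ⟪g, z - xbar⟫ ↔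
      ⟪weiszfeldT w a xbar - xbar, z - xbar⟫ ≤ 0) := by
    intro z
    rw [hgT', real_inner_smul_left]
    constructor
    · intro h0
      have h1 : (0:ℝ) ≤ ⟪xbar - weiszfeldT w a xbar, z - xbar⟫ :=
        nonneg_of_mul_nonneg_right h0 hs
      have : ⟪weiszfeldT w a xbar - xbar, z - xbar⟫ =
          -⟪xbar - weiszfeldT w a xbar, z - xbar⟫ := by
        rw [← inner_neg_left]; congr 1; abel
      rw [this]; linarith
    · intro h0
      have : ⟪xbar - weiszfeldT w a xbar, z - xbar⟫ =
          -⟪weiszfeldT w a xbar - xbar, z - xbar⟫ := by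
        rw [← inner_neg_left]; congr 1; abel
      rw [this]
      have : (0:ℝ) ≤ -⟪weiszfeldT w a xbar - xbar, z - xbar⟫ := by linarith
      positivity
  constructor
  · intro h
    -- show proj (T xbar) = xbar using uniqueness of the variational inequality
    obtain ⟨hpC, hpvi⟩ := hproj (weiszfeldT w a xbar)
    set p := proj (weiszfeldT w a xbar) with hp_def
    have h1 : ⟪weiszfeldT w a xbar - p, xbar - p⟫ ≤ 0 := hpvi xbar hxC
    have h2 : ⟪weiszfeldT w a xbar - xbar, p - xbar⟫ ≤ 0 := (hiff p).1 (h p hpC)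
    have h3 : ⟪xbar - p, xbar - p⟫ ≤ 0 := by
      have e : ⟪xbar - p, xbar - p⟫ =
          ⟪weiszfeldT w a xbar - p, xbar - p⟫ - ⟪weiszfeldT w a xbar - xbar, xbar - p⟫ := by
        rw [← inner_sub_left]; congr 1; abel
      have e2 : ⟪weiszfeldT w a xbar - xbar, xbar - p⟫ =
          -⟪weiszfeldT w a xbar - xbar, p - xbar⟫ := by
        rw [← inner_neg_right]; congr 1; abel
      rw [e, e2]; linarith
    have h4 : xbar - p = 0 := by
      have := real_inner_self_nonneg (x := xbar - p)
      have h5 : ⟪xbar - p, xbar - p⟫ = 0 := le_antisymm h3 this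
      exact inner_self_eq_zero.mp h5
    exact (sub_eq_zero.mp h4).symm
  · intro h z hz
    obtain ⟨hpC, hpvi⟩ := hproj (weiszfeldT w a xbar)
    rw [h] at hpvi
    exact (hiff z).2 (hpvi z hz)
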